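/- Let c > 1 and let η > 0 be sufficiently small; set K = X^{2η} and write ℒ = log X. Let λₙ (X/8 < n ≤ X) be real numbers, let aₙ be real numbers with |aₙ| ≤ C₁·ℒ for some constant C₁, and set 𝒮(x) = Σ_{X/8 < n ≤ X} aₙ e(λₙ x) and 𝒥(x) = Σ_{X/8 < n ≤ X} e(λₙ x). Suppose there are constants U > 0 and C₂ > 0 such that |𝒥(x)| ≤ C₂·( U + ℒ·X^{1−c}·|x|^{−1} ) for all x with 0 < |x| ≤ 2K. Then there is a constant C (depending only on c, η, C₁, C₂) such that for every bounded Borel measurable function G on [X^{1−c}, K], |∫_{X^{1−c}}^{K} 𝒮(x) G(x) dx|² ≤ C·( ℒ⁴ · X^{2−c} · ∫_{X^{1−c}}^{K} |G(x)|² dx + U·X·ℒ² · ( ∫_{X^{1−c}}^{K} |G(x)| dx )² ). -/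

import Mathlib

open Real MeasureTheory

/-- `e θ = exp(2πiθ)`. -/
noncomputable def e (θ : ℝ) : ℂ := Complex.exp (2 * Real.pi * Complex.I * θ)

/-- `Ssum X a lam x = Σ_{X/8 < n ≤ X} aₙ e(λₙ x)`. -/
noncomputable def Ssum (X : ℝ) (a lam : ℕ → ℝ) (x : ℝ) : ℂ :=
  ∑ n ∈ Finset.Ioc ⌊X/8⌋₊ ⌊X⌋₊, (a n : ℂ) * e (lam n * x)

/-- `Jsum X lam x = Σ_{X/8 < n ≤ X} e(λₙ x)`. -/
noncomputable def Jsum (X : ℝ) (lam : ℕ → ℝ) (x : ℝ) : ℂ :=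
  ∑ n ∈ Finset.Ioc ⌊X/8⌋₊ ⌊X⌋₊, e (lam n * x)

lemma e_abs (θ : ℝ) : ‖e θ‖ = 1 := by
  rw [e, Complex.norm_exp]
  norm_num [Complex.mul_re, Complex.mul_im]

lemma e_add (θ₁ θ₂ : ℝ) : e θ₁ * e θ₂ = e (θ₁ + θ₂) := by
  rw [e, e, e, ← Complex.exp_add]
  push_cast
  ring_nf

lemma e_conj (θ : ℝ) : (starRingEnd ℂ) (e θ) = e (-θ) := by
  rw [e, e, ← Complex.exp_conj]
  congr 1
  rw [map_mul, map_mul, map_mul, Complex.conj_I, Complex.conj_ofReal, Complex.conj_ofReal, map_ofNat]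
  push_cast
  ring

lemma e_continuous : Continuous e := by
  unfold e
  fun_prop

lemma integrable_of_bdd {α : Type*} [MeasurableSpace α] {μ : Measure α} [IsFiniteMeasure μ]
    {E : Type*} [NormedAddCommGroup E] {f : α → E}
    (hf : AEStronglyMeasurable f μ) (M : ℝ) (h : ∀ x, ‖f x‖ ≤ M) : Integrable f μ :=
  (integrable_const M).mono' hf (Filter.Eventually.of_forall h)

lemma Jsum_abs_le (X : ℝ) (lam : ℕ → ℝ) (t : ℝ) (hX : 0 ≤ X) :
    ‖Jsum X lam t‖ ≤ X := by
  calc ‖Jsum X lam t‖ ≤ ∑ n ∈ Finset.Ioc ⌊X/8⌋₊ ⌊X⌋₊, ‖e (lam n * t)‖ :=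
        norm_sum_le _ _
    _ = (Finset.Ioc ⌊X/8⌋₊ ⌊X⌋₊).card := by simp [e_abs]
    _ ≤ (⌊X⌋₊ : ℝ) := by
        rw [Nat.card_Ioc]
        exact_mod_cast Nat.cast_le.mpr (Nat.sub_le _ _)
    _ ≤ X := Nat.floor_le hX

lemma g_cont (B Xr : ℝ) (hB : 0 < B) (hX : 0 < Xr) :
    Continuous (fun t : ℝ => 2*Xr*B/(B + Xr*|t|)) := by
  apply Continuous.div continuous_const
  · fun_prop
  · intro t
    have : 0 ≤ Xr * |t| := mul_nonneg hX.le (abs_nonneg t)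
    positivity

lemma g_integral (B Xr L : ℝ) (hB : 0 < B) (hX : 0 < Xr) (hL : 0 ≤ L) :
    ∫ t in (-L)..L, 2*Xr*B/(B + Xr*|t|) = 4 * B * Real.log (1 + Xr*L/B) := by
  set g : ℝ → ℝ := fun t => 2*Xr*B/(B + Xr*|t|) with hg
  have hgc : Continuous g := g_cont B Xr hB hX
  have h1 : ∫ t in (0:ℝ)..L, g t = 2 * B * Real.log (1 + Xr*L/B) := by
    have hcongr : ∫ t in (0:ℝ)..L, g t = ∫ t in (0:ℝ)..L, 2*B * (t + B/Xr)⁻¹ := by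
      apply intervalIntegral.integral_congr
      intro t ht
      rw [Set.uIcc_of_le hL] at ht
      have ht0 : 0 ≤ t := ht.1
      have habs : |t| = t := abs_of_nonneg ht0
      have hden : B + Xr * t > 0 := by positivity
      have hden2 : t + B/Xr > 0 := by positivity
      simp only [hg, habs]
      field_simp
      ring
    rw [hcongr, intervalIntegral.integral_const_mul]
    have hshift : ∫ t in (0:ℝ)..L, (t + B/Xr)⁻¹
        = ∫ u in (B/Xr)..(L + B/Xr), u⁻¹ := by
      have := intervalIntegral.integral_comp_add_right (a := 0) (b := L)
        (fun u : ℝ => u⁻¹) (B/Xr)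
      simpa using this
    rw [hshift, integral_inv_of_pos (by positivity) (by positivity)]
    congr 1
    field_simp
    ring
  have h2 : ∫ t in (-L)..(0:ℝ), g t = ∫ t in (0:ℝ)..L, g t := by
    have := intervalIntegral.integral_comp_neg (a := 0) (b := L) g
    simp only [neg_zero] at this
    rw [← this]
    apply intervalIntegral.integral_congr
    intro t ht
    simp [hg, abs_neg]
  have h3 : (∫ t in (-L)..(0:ℝ), g t) + ∫ t in (0:ℝ)..L, g t = ∫ t in (-L)..L, g t :=
    intervalIntegral.integral_add_adjacent_intervals
      (hgc.intervalIntegrable (μ := volume) (-L) 0) (hgc.intervalIntegrable (μ := volume) 0 L)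
  rw [← h3, h2, h1]; ring

lemma inner_bound (B Xr a' b' : ℝ) (hB : 0 < B) (hX : 0 < Xr) (hab : a' ≤ b')
    (x : ℝ) (hx : x ∈ Set.Icc a' b') :
    ∫ y in Set.Ioc a' b', 2*Xr*B/(B + Xr*|x - y|)
      ≤ 4 * B * Real.log (1 + Xr*(b'-a')/B) := by
  set L := b' - a' with hLdef
  have hL : 0 ≤ L := by simp only [hLdef]; linarith
  set g : ℝ → ℝ := fun t => 2*Xr*B/(B + Xr*|t|) with hg
  have hgc : Continuous g := g_cont B Xr hB hX
  have hφc : Continuous (fun y => g (x - y)) := hgc.comp (by fun_prop)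
  have hsub : Set.Ioc a' b' ⊆ Set.Icc (x - L) (x + L) := by
    intro y hy
    constructor
    · have : x - L ≤ a' := by simp only [hLdef]; linarith [hx.2]
      linarith [hy.1]
    · have : b' ≤ x + L := by simp only [hLdef]; linarith [hx.1]
      linarith [hy.2]
  have step1 : ∫ y in Set.Ioc a' b', g (x - y)
      ≤ ∫ y in Set.Icc (x - L) (x + L), g (x - y) := by
    apply setIntegral_mono_set
    · exact hφc.continuousOn.integrableOn_Icc
    · apply Filter.Eventually.of_forall
      intro y
      have : 0 ≤ Xr * |x - y| := mul_nonneg hX.le (abs_nonneg _)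
      positivity
    · exact Filter.Eventually.of_forall hsub
  have step2 : ∫ y in Set.Icc (x - L) (x + L), g (x - y)
      = ∫ y in (x - L)..(x + L), g (x - y) := by
    rw [integral_Icc_eq_integral_Ioc, intervalIntegral.integral_of_le (by linarith)]
  have step3 : ∫ y in (x - L)..(x + L), g (x - y) = ∫ t in (-L)..L, g t := by
    rw [intervalIntegral.integral_comp_sub_left g x]
    congr 1 <;> ring
  calc ∫ y in Set.Ioc a' b', g (x - y)
      ≤ ∫ y in Set.Icc (x - L) (x + L), g (x - y) := step1
    _ = ∫ t in (-L)..L, g t := by rw [step2, step3]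
    _ = 4 * B * Real.log (1 + Xr*L/B) := g_integral B Xr L hB hX hL

lemma J_bound {X K U C₂ Bq : ℝ} (lam : ℕ → ℝ) (hXpos : 0 < X) (hU : 0 ≤ U) (hC₂ : 0 < C₂)
    (hBq : 0 < Bq)
    (hJ : ∀ x : ℝ, x ≠ 0 → |x| ≤ 2*K → ‖Jsum X lam x‖ ≤ C₂ * (U + Bq/|x|))
    (t : ℝ) (ht : |t| ≤ K) :
    ‖Jsum X lam t‖ ≤ C₂*U + 2*X*(C₂*Bq)/((C₂*Bq) + X*|t|) := by
  set B := C₂ * Bq with hBdef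
  have hBpos : 0 < B := by positivity
  have hCU : 0 ≤ C₂ * U := mul_nonneg hC₂.le hU
  rcases eq_or_ne t 0 with rfl | ht0
  · simp only [abs_zero, mul_zero, add_zero]
    rw [mul_div_assoc, div_self hBpos.ne']
    have := Jsum_abs_le X lam 0 hXpos.le
    linarith
  · have hts : 0 < |t| := abs_pos.mpr ht0
    have hden : 0 < B + X * |t| := by positivity
    have hb1 : ‖Jsum X lam t‖ ≤ C₂*U + B/|t| := by
      have := hJ t ht0 (by nlinarith [abs_nonneg t])
      calc ‖Jsum X lam t‖ ≤ C₂ * (U + Bq/|t|) := this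
        _ = C₂*U + B/|t| := by rw [hBdef]; field_simp
    have hb2 : ‖Jsum X lam t‖ ≤ X := Jsum_abs_le X lam t hXpos.le
    rcases le_total (X * |t|) B with h | h
    · have : X ≤ 2*X*B/(B + X*|t|) := by
        rw [le_div_iff₀ hden]
        nlinarith
      linarith
    · have : B/|t| ≤ 2*X*B/(B + X*|t|) := by
        rw [div_le_div_iff₀ hts hden]
        nlinarith
      linarith

set_option maxHeartbeats 4000000 in
theorem lemma13ii (c : ℝ) (hc : 1 < c) :
    ∃ η₀ > 0, ∀ η : ℝ, 0 < η → η ≤ η₀ →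
    ∀ C₁ C₂ : ℝ, 0 < C₁ → 0 < C₂ →
    ∃ C > 0, ∀ X : ℝ, 2 ≤ X →
    ∀ lam a : ℕ → ℝ, (∀ n, |a n| ≤ C₁ * Real.log X) →
    ∀ U : ℝ, 0 < U →
    (∀ x : ℝ, x ≠ 0 → |x| ≤ 2 * X ^ (2 * η) →
      ‖Jsum X lam x‖ ≤ C₂ * (U + Real.log X * X ^ (1 - c) / |x|)) →
    ∀ G : ℝ → ℂ, Measurable G → (∃ M, ∀ x, ‖G x‖ ≤ M) →
    ‖∫ x in X ^ (1 - c)..X ^ (2 * η), Ssum X a lam x * G x‖ ^ 2 ≤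
      C * ((Real.log X) ^ 4 * X ^ (2 - c) *
            (∫ x in X ^ (1 - c)..X ^ (2 * η), ‖G x‖ ^ 2)
          + U * X * (Real.log X) ^ 2 *
            (∫ x in X ^ (1 - c)..X ^ (2 * η), ‖G x‖) ^ 2) := by
  have hlog2 : 0 < Real.log 2 := Real.log_pos (by norm_num)
  refine ⟨1/2, by norm_num, ?_⟩
  intro η hη hηle C₁ C₂ hC₁ hC₂
  set κ := (C₂ * Real.log 2)⁻¹ with hκdef
  have hκ : 0 < κ := by positivity
  set D := Real.log (1 + κ) / Real.log 2 + (c + 1) with hDdef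
  have hD : 0 < D := by
    have h1 : 0 ≤ Real.log (1 + κ) := Real.log_nonneg (by linarith)
    have : 0 ≤ Real.log (1 + κ) / Real.log 2 := div_nonneg h1 hlog2.le
    simp only [hDdef]; linarith
  refine ⟨C₁^2 * C₂ * (1 + 4*D), by positivity, ?_⟩
  intro X hX2 lam a ha U hU hJ G hGm hGb
  obtain ⟨M, hM⟩ := hGb
  have hM0 : 0 ≤ M := le_trans (norm_nonneg _) (hM 0)
  have hX0 : (0:ℝ) < X := by linarith
  have hX1 : (1:ℝ) ≤ X := by linarith
  set ℒ := Real.log X with hLdef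
  have hℒ2 : Real.log 2 ≤ ℒ := Real.log_le_log (by norm_num) hX2
  have hℒpos : 0 < ℒ := lt_of_lt_of_le hlog2 hℒ2
  set a' := X ^ (1 - c) with ha'def
  set b' := X ^ (2 * η) with hb'def
  have ha'pos : 0 < a' := Real.rpow_pos_of_pos hX0 _
  have hb'pos : 0 < b' := Real.rpow_pos_of_pos hX0 _
  have hab : a' ≤ b' := Real.rpow_le_rpow_of_exponent_le hX1 (by nlinarith)
  set A := Set.Ioc a' b' with hAdef
  haveI hfin : IsFiniteMeasure (volume.restrict A) :=
    ⟨by rw [Measure.restrict_apply_univ]; exact measure_Ioc_lt_top⟩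
  set B := C₂ * (ℒ * X ^ (1 - c)) with hBdef
  have hBpos : 0 < B := by positivity
  set gfun : ℝ → ℝ := fun t => 2*X*B/(B + X*|t|) with hgdef
  have hgcont : Continuous gfun := g_cont B X hBpos hX0
  have hgnonneg : ∀ t, 0 ≤ gfun t := by
    intro t
    have : 0 ≤ X * |t| := mul_nonneg hX0.le (abs_nonneg t)
    simp only [hgdef]
    positivity
  have hgle : ∀ t, gfun t ≤ 2*X := by
    intro t
    have h1 : 0 ≤ X * |t| := mul_nonneg hX0.le (abs_nonneg t)
    have hden : 0 < B + X * |t| := by positivity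
    rw [hgdef, div_le_iff₀ hden]
    nlinarith
  -- the J pointwise bound
  have hJb : ∀ t : ℝ, |t| ≤ b' → ‖Jsum X lam t‖ ≤ C₂*U + gfun t := by
    intro t ht
    have := J_bound (K := b') (Bq := ℒ * X ^ (1-c)) lam hX0 hU.le hC₂ (by positivity) hJ t ht
    simpa [hgdef, hBdef] using this
  -- the log bound
  have hlogbound : Real.log (1 + X*(b'-a')/B) ≤ D * ℒ := by
    have hP1 : (1:ℝ) ≤ X ^ (c+1) := by
      have := Real.rpow_le_rpow_of_exponent_le hX1 (show (0:ℝ) ≤ c+1 by linarith)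
      simpa [Real.rpow_zero] using this
    have hu : X*(b'-a')/B ≤ κ * X^(c+1) := by
      rw [div_le_iff₀ hBpos]
      have e1 : κ * X^(c+1) * B = (ℒ/Real.log 2) * X^(2:ℝ) := by
        have : X^(c+1) * X^(1-c) = X^(2:ℝ) := by
          rw [← Real.rpow_add hX0]
          congr 1
          ring
        rw [hκdef, hBdef, ← this]
        field_simp
      rw [e1]
      have e2 : X * b' ≤ X^(2:ℝ) := by
        have : X * b' = X^(1 + 2*η) := by
          rw [hb'def, ← Real.rpow_one_add' (by positivity) (by nlinarith)]
        rw [this]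
        exact Real.rpow_le_rpow_of_exponent_le hX1 (by linarith)
      have e3 : X^(2:ℝ) ≤ (ℒ/Real.log 2) * X^(2:ℝ) := by
        have h1 : (1:ℝ) ≤ ℒ/Real.log 2 := (one_le_div hlog2).mpr hℒ2
        have h2 := mul_le_mul_of_nonneg_right h1 (Real.rpow_pos_of_pos hX0 (2:ℝ)).le
        rw [one_mul] at h2
        exact h2
      nlinarith [mul_pos hX0 ha'pos]
    have hpos : (0:ℝ) < 1 + X*(b'-a')/B := by
      have : 0 ≤ X*(b'-a')/B := by
        apply div_nonneg _ hBpos.le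
        apply mul_nonneg hX0.le
        linarith
      linarith
    calc Real.log (1 + X*(b'-a')/B) ≤ Real.log ((1+κ) * X^(c+1)) := by
          apply Real.log_le_log hpos
          nlinarith
      _ = Real.log (1+κ) + (c+1) * ℒ := by
          rw [Real.log_mul (by positivity) (by positivity), Real.log_rpow hX0]
      _ ≤ (Real.log (1+κ)/Real.log 2) * ℒ + (c+1) * ℒ := by
          have h1 : 0 ≤ Real.log (1 + κ) := Real.log_nonneg (by linarith)
          have : Real.log (1+κ) = (Real.log (1+κ)/Real.log 2) * Real.log 2 := by
            field_simp
          nlinarith [div_nonneg h1 hlog2.le]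
      _ = D * ℒ := by rw [hDdef]; ring
  -- inner integral bound
  have hInner : ∀ x ∈ A, (∫ y in A, gfun (x - y)) ≤ 4*B*(D*ℒ) := by
    intro x hx
    have h1 := inner_bound B X a' b' hBpos hX0 hab x ⟨hx.1.le, hx.2⟩
    calc (∫ y in A, gfun (x - y)) ≤ 4 * B * Real.log (1 + X*(b'-a')/B) := h1
      _ ≤ 4*B*(D*ℒ) := by nlinarith

  -- notation and basic integrability
  have hAmeas : MeasurableSet A := hAdef ▸ measurableSet_Ioc
  set s : Finset ℕ := Finset.Ioc ⌊X/8⌋₊ ⌊X⌋₊ with hsdef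
  set In : ℕ → ℂ := fun n => ∫ x in A, e (lam n * x) * G x with hIndef
  have hecont : ∀ r : ℝ, Continuous (fun x : ℝ => e (r * x)) :=
    fun r => e_continuous.comp (continuous_const.mul continuous_id)
  have hecont2 : ∀ r : ℝ, Continuous (fun x : ℝ => e (-(r * x))) :=
    fun r => e_continuous.comp (by fun_prop)
  have hIn_int : ∀ n, IntegrableOn (fun x => e (lam n * x) * G x) A volume := by
    intro n
    apply integrable_of_bdd (((hecont (lam n)).measurable.mul hGm).aestronglyMeasurable) M
    intro x
    rw [Pi.mul_apply, norm_mul, e_abs, one_mul]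
    exact hM x
  have hFn_int : ∀ n, IntegrableOn (fun x => (a n : ℂ) * (e (lam n * x) * G x)) A volume :=
    fun n => (hIn_int n).const_mul _
  have hsumrw : (∫ x in A, Ssum X a lam x * G x) = ∑ n ∈ s, (a n : ℂ) * In n := by
    have h0 : (fun x => Ssum X a lam x * G x)
        = fun x => ∑ n ∈ s, (a n : ℂ) * (e (lam n * x) * G x) := by
      funext x
      rw [Ssum, Finset.sum_mul]
      exact Finset.sum_congr rfl fun n _ => by ring
    rw [h0, integral_finset_sum s (fun n _ => hFn_int n)]
    exact Finset.sum_congr rfl fun n _ => integral_const_mul _ _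
  have h1 : ‖∫ x in A, Ssum X a lam x * G x‖
      ≤ ∑ n ∈ s, |a n| * ‖In n‖ := by
    rw [hsumrw]
    refine le_trans (norm_sum_le _ _) (le_of_eq ?_)
    exact Finset.sum_congr rfl fun n _ => by rw [norm_mul, Complex.norm_real, Real.norm_eq_abs]
  have h2 : (∑ n ∈ s, |a n| * ‖In n‖)^2
      ≤ (∑ n ∈ s, |a n|^2) * (∑ n ∈ s, ‖In n‖^2) :=
    Finset.sum_mul_sq_le_sq_mul_sq s _ _
  have h3 : (∑ n ∈ s, |a n|^2) ≤ X * (C₁ * ℒ)^2 := by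
    calc (∑ n ∈ s, |a n|^2) ≤ ∑ n ∈ s, (C₁*ℒ)^2 :=
          Finset.sum_le_sum fun n _ => pow_le_pow_left₀ (abs_nonneg _) (ha n) 2
      _ = (s.card : ℝ) * (C₁*ℒ)^2 := by rw [Finset.sum_const, nsmul_eq_mul]
      _ ≤ X * (C₁*ℒ)^2 := by
          apply mul_le_mul_of_nonneg_right _ (by positivity)
          calc (s.card : ℝ) ≤ (⌊X⌋₊:ℝ) := by
                rw [hsdef, Nat.card_Ioc]; exact_mod_cast Nat.cast_le.mpr (Nat.sub_le _ _)
            _ ≤ X := Nat.floor_le hX0.le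
  -- product measure setup
  set PP := (volume.restrict A).prod (volume.restrict A) with hPPdef
  haveI : IsFiniteMeasure PP := by rw [hPPdef]; infer_instance
  have hmeasG1 : Measurable (fun z : ℝ×ℝ => G z.1) := hGm.comp measurable_fst
  have hmeasG2 : Measurable (fun z : ℝ×ℝ => G z.2) := hGm.comp measurable_snd
  have habsG1 : Measurable (fun z : ℝ×ℝ => ‖G z.1‖) :=
    continuous_norm.measurable.comp hmeasG1
  have habsG2 : Measurable (fun z : ℝ×ℝ => ‖G z.2‖) :=
    continuous_norm.measurable.comp hmeasG2
  have hmeasJ : Measurable (fun z : ℝ×ℝ => Jsum X lam (z.1 - z.2)) := by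
    have hc : Continuous (Jsum X lam) := by
      unfold Jsum; exact continuous_finset_sum _ fun n _ => hecont (lam n)
    exact (hc.comp (continuous_fst.sub continuous_snd)).measurable
  have hmeasg : Measurable (fun z : ℝ×ℝ => gfun (z.1 - z.2)) :=
    (hgcont.comp (continuous_fst.sub continuous_snd)).measurable
  set W := ∑ n ∈ s, In n * (starRingEnd ℂ) (In n) with hWdef
  have hW1 : (∑ n ∈ s, ‖In n‖^2) = W.re := by
    rw [hWdef, Complex.re_sum]
    exact Finset.sum_congr rfl fun n _ => by
      rw [Complex.mul_conj, Complex.ofReal_re, Complex.sq_norm]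
  have hΦ_int : ∀ n : ℕ, Integrable (fun z : ℝ×ℝ =>
      (e (lam n * z.1) * G z.1) * (e (-(lam n * z.2)) * (starRingEnd ℂ) (G z.2))) PP := by
    intro n
    refine integrable_of_bdd ?_ (M*M) ?_
    · exact ((((hecont (lam n)).comp continuous_fst).measurable.mul hmeasG1).mul
        (((hecont2 (lam n)).comp continuous_snd).measurable.mul (Complex.continuous_conj.measurable.comp hmeasG2))).aestronglyMeasurable
    · intro z
      rw [norm_mul, norm_mul, norm_mul]
      simp only [e_abs, one_mul, Complex.norm_conj]
      exact mul_le_mul (hM _) (hM _) (norm_nonneg _) hM0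

  have hW2 : W = ∫ z, (G z.1 * (starRingEnd ℂ) (G z.2)) * Jsum X lam (z.1 - z.2) ∂PP := by
    have hterm : ∀ n ∈ s, In n * (starRingEnd ℂ) (In n)
        = ∫ z, (e (lam n * z.1) * G z.1) * (e (-(lam n * z.2)) * (starRingEnd ℂ) (G z.2)) ∂PP := by
      intro n _
      have hconj : (starRingEnd ℂ) (In n) = ∫ y in A, e (-(lam n * y)) * (starRingEnd ℂ) (G y) := by
        simp only [hIndef]
        rw [← integral_conj]
        congr 1
        funext y
        rw [map_mul, e_conj]
      rw [hPPdef, integral_prod_mul (fun x => e (lam n * x) * G x)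
        (fun y => e (-(lam n * y)) * (starRingEnd ℂ) (G y)), hconj]
    rw [hWdef, Finset.sum_congr rfl hterm, ← integral_finset_sum s (fun n _ => hΦ_int n)]
    congr 1
    funext z
    rw [Jsum, Finset.mul_sum]
    refine Finset.sum_congr rfl fun n _ => ?_
    rw [show lam n * (z.1 - z.2) = lam n * z.1 + -(lam n * z.2) by ring, ← e_add]
    ring
  have habsJ_int : Integrable (fun z : ℝ×ℝ =>
      ‖G z.1‖ * ‖G z.2‖ * ‖Jsum X lam (z.1-z.2)‖) PP := by
    refine integrable_of_bdd (((habsG1.mul habsG2).mul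
      (continuous_norm.measurable.comp hmeasJ)).aestronglyMeasurable) (M*M*X) ?_
    intro z
    rw [Real.norm_eq_abs, abs_of_nonneg (by positivity)]
    exact mul_le_mul (mul_le_mul (hM _) (hM _) (norm_nonneg _) hM0)
      (Jsum_abs_le X lam _ hX0.le) (norm_nonneg _) (by positivity)
  have hK_int : Integrable (fun z : ℝ×ℝ =>
      ‖G z.1‖ * ‖G z.2‖ * (C₂*U + gfun (z.1-z.2))) PP := by
    refine integrable_of_bdd (((habsG1.mul habsG2).mul
      ((measurable_const.add hmeasg))).aestronglyMeasurable) (M*M*(C₂*U + 2*X)) ?_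
    intro z
    have hg0 := hgnonneg (z.1 - z.2)
    have hg1 := hgle (z.1 - z.2)
    have hCU : 0 ≤ C₂*U := by positivity
    rw [Real.norm_eq_abs, abs_of_nonneg (by positivity)]
    refine mul_le_mul (mul_le_mul (hM _) (hM _) (norm_nonneg _) hM0)
      (by linarith) (by linarith) (by positivity)
  have hW3 : W.re ≤ ∫ z, ‖G z.1‖ * ‖G z.2‖
      * ‖Jsum X lam (z.1-z.2)‖ ∂PP := by
    refine le_trans (Complex.re_le_norm W) ?_
    rw [hW2]
    refine le_trans (norm_integral_le_integral_norm _) (le_of_eq ?_)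
    congr 1
    funext z
    rw [norm_mul, norm_mul]
    simp only [Complex.norm_conj]
  have hW4 : (∫ z, ‖G z.1‖ * ‖G z.2‖
        * ‖Jsum X lam (z.1-z.2)‖ ∂PP)
      ≤ ∫ z, ‖G z.1‖ * ‖G z.2‖ * (C₂*U + gfun (z.1-z.2)) ∂PP := by
    refine integral_mono_ae habsJ_int hK_int ?_
    rw [hPPdef, Measure.prod_restrict]
    refine ae_restrict_of_forall_mem (hAmeas.prod hAmeas) ?_
    intro z hz
    have hz1 : z.1 ∈ A := hz.1
    have hz2 : z.2 ∈ A := hz.2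
    rw [hAdef] at hz1 hz2
    have hd : |z.1 - z.2| ≤ b' := by
      rw [abs_le]
      constructor
      · nlinarith [hz1.1, hz2.2, ha'pos]
      · nlinarith [hz1.2, hz2.1, ha'pos]
    exact mul_le_mul_of_nonneg_left (hJb _ hd) (by positivity)

  set Q1 := ∫ x in A, ‖G x‖ with hQ1def
  set Q2 := ∫ x in A, ‖G x‖^2 with hQ2def
  have habsG_int : IntegrableOn (fun x => ‖G x‖) A volume := by
    refine integrable_of_bdd (continuous_norm.measurable.comp hGm).aestronglyMeasurable M ?_
    intro x
    rw [Real.norm_eq_abs, abs_of_nonneg (norm_nonneg _)]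
    exact hM x
  have habsG2_int : IntegrableOn (fun x => ‖G x‖^2) A volume := by
    refine integrable_of_bdd ((continuous_norm.measurable.comp hGm).pow_const 2).aestronglyMeasurable (M^2) ?_
    intro x
    rw [Real.norm_eq_abs, abs_of_nonneg (by positivity)]
    exact pow_le_pow_left₀ (norm_nonneg _) (hM x) 2
  have hGG_int : Integrable (fun z : ℝ×ℝ => ‖G z.1‖ * ‖G z.2‖) PP := by
    refine integrable_of_bdd (habsG1.mul habsG2).aestronglyMeasurable (M*M) ?_
    intro z
    rw [Real.norm_eq_abs, abs_of_nonneg (by positivity)]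
    exact mul_le_mul (hM _) (hM _) (norm_nonneg _) hM0
  have hGGg_int : Integrable (fun z : ℝ×ℝ =>
      ‖G z.1‖ * ‖G z.2‖ * gfun (z.1-z.2)) PP := by
    refine integrable_of_bdd ((habsG1.mul habsG2).mul hmeasg).aestronglyMeasurable (M*M*(2*X)) ?_
    intro z
    rw [Real.norm_eq_abs, abs_of_nonneg (mul_nonneg (by positivity) (hgnonneg _))]
    exact mul_le_mul (mul_le_mul (hM _) (hM _) (norm_nonneg _) hM0)
      (hgle _) (hgnonneg _) (by positivity)
  have h1g_int : Integrable (fun z : ℝ×ℝ => ‖G z.1‖^2 * gfun (z.1-z.2)) PP := by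
    refine integrable_of_bdd ((habsG1.pow_const 2).mul hmeasg).aestronglyMeasurable (M^2*(2*X)) ?_
    intro z
    rw [Real.norm_eq_abs, abs_of_nonneg (mul_nonneg (by positivity) (hgnonneg _))]
    exact mul_le_mul (pow_le_pow_left₀ (norm_nonneg _) (hM _) 2)
      (hgle _) (hgnonneg _) (by positivity)
  have h2g_int : Integrable (fun z : ℝ×ℝ => ‖G z.2‖^2 * gfun (z.1-z.2)) PP := by
    refine integrable_of_bdd ((habsG2.pow_const 2).mul hmeasg).aestronglyMeasurable (M^2*(2*X)) ?_
    intro z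
    rw [Real.norm_eq_abs, abs_of_nonneg (mul_nonneg (by positivity) (hgnonneg _))]
    exact mul_le_mul (pow_le_pow_left₀ (norm_nonneg _) (hM _) 2)
      (hgle _) (hgnonneg _) (by positivity)
  have hsplit : (∫ z, ‖G z.1‖ * ‖G z.2‖ * (C₂*U + gfun (z.1-z.2)) ∂PP)
      = C₂*U*Q1^2 + ∫ z, ‖G z.1‖ * ‖G z.2‖ * gfun (z.1-z.2) ∂PP := by
    have h0 : (fun z : ℝ×ℝ => ‖G z.1‖ * ‖G z.2‖ * (C₂*U + gfun (z.1-z.2)))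
        = fun z => (C₂*U) * (‖G z.1‖ * ‖G z.2‖)
            + ‖G z.1‖ * ‖G z.2‖ * gfun (z.1-z.2) := by
      funext z; ring
    rw [h0, integral_add (hGG_int.const_mul _) hGGg_int, integral_const_mul, hPPdef,
      integral_prod_mul (fun x => ‖G x‖) (fun x => ‖G x‖)]
    ring
  have hamgm : (∫ z, ‖G z.1‖ * ‖G z.2‖ * gfun (z.1-z.2) ∂PP)
      ≤ ∫ z, (‖G z.1‖^2 * gfun (z.1-z.2) + ‖G z.2‖^2 * gfun (z.1-z.2))/2 ∂PP := by
    refine integral_mono hGGg_int ((h1g_int.add h2g_int).div_const 2) fun z => ?_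
    have h0 := hgnonneg (z.1 - z.2)
    nlinarith [sq_nonneg (‖G z.1‖ - ‖G z.2‖),
      norm_nonneg (G z.1), norm_nonneg (G z.2)]
  have hgeven : ∀ t : ℝ, gfun (-t) = gfun t := by
    intro t; simp only [hgdef, abs_neg]
  have hswap : (∫ z, ‖G z.2‖^2 * gfun (z.1-z.2) ∂PP)
      = ∫ z, ‖G z.1‖^2 * gfun (z.1-z.2) ∂PP := by
    rw [hPPdef]
    rw [← integral_prod_swap (fun z : ℝ×ℝ => ‖G z.1‖^2 * gfun (z.1 - z.2))]
    congr 1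
    funext z
    simp only [Prod.fst_swap, Prod.snd_swap]
    rw [show z.2 - z.1 = -(z.1 - z.2) by ring, hgeven]
  have hfub : (∫ z, ‖G z.1‖^2 * gfun (z.1-z.2) ∂PP) ≤ 4*B*(D*ℒ) * Q2 := by
    rw [hPPdef, integral_prod _ (hPPdef ▸ h1g_int)]
    have hmono : (∫ x in A, (∫ y in A, ‖G x‖^2 * gfun (x - y)))
        ≤ ∫ x in A, ‖G x‖^2 * (4*B*(D*ℒ)) := by
      refine setIntegral_mono_on ((hPPdef ▸ h1g_int).integral_prod_left)
        (habsG2_int.mul_const _) hAmeas fun x hx => ?_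
      rw [integral_const_mul]
      exact mul_le_mul_of_nonneg_left (hInner x hx) (by positivity)
    refine le_trans hmono (le_of_eq ?_)
    rw [integral_mul_const]
    ring
  have h4 : (∑ n ∈ s, ‖In n‖^2) ≤ C₂*U*Q1^2 + 4*B*(D*ℒ)*Q2 := by
    rw [hW1]
    have hhalf : (∫ z, (‖G z.1‖^2 * gfun (z.1-z.2)
          + ‖G z.2‖^2 * gfun (z.1-z.2))/2 ∂PP)
        = ∫ z, ‖G z.1‖^2 * gfun (z.1-z.2) ∂PP := by
      rw [integral_div, integral_add h1g_int h2g_int, hswap]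
      ring
    calc W.re ≤ _ := hW3
      _ ≤ _ := hW4
      _ = C₂*U*Q1^2 + ∫ z, ‖G z.1‖ * ‖G z.2‖ * gfun (z.1-z.2) ∂PP := hsplit
      _ ≤ C₂*U*Q1^2 + ∫ z, ‖G z.1‖^2 * gfun (z.1-z.2) ∂PP := by
          rw [← hhalf]; linarith [hamgm]
      _ ≤ C₂*U*Q1^2 + 4*B*(D*ℒ)*Q2 := by linarith [hfub]
  -- final assembly
  have hQ1nn : 0 ≤ Q1 := integral_nonneg fun x => norm_nonneg _
  have hQ2nn : 0 ≤ Q2 := integral_nonneg fun x => by positivity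
  have hSInn : 0 ≤ ∑ n ∈ s, ‖In n‖^2 :=
    Finset.sum_nonneg fun n _ => sq_nonneg _
  have hXX : X * X^(1-c) = X^(2-c) := by
    have h := Real.rpow_add hX0 1 (1-c)
    rw [Real.rpow_one] at h
    rw [← h]
    congr 1
    ring
  rw [intervalIntegral.integral_of_le hab, intervalIntegral.integral_of_le hab,
    intervalIntegral.integral_of_le hab, ← hAdef, ← hQ1def, ← hQ2def]
  have t1 : (0:ℝ) ≤ U*X*ℒ^2*Q1^2 := by positivity
  have t2 : (0:ℝ) ≤ ℒ^4*X^(2-c)*Q2 := by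
    have := Real.rpow_pos_of_pos hX0 (2-c)
    positivity
  have hconst : C₁^2*C₂ ≤ C₁^2*C₂*(1+4*D) := by
    nlinarith [mul_nonneg (mul_nonneg (sq_nonneg C₁) hC₂.le) hD.le]
  have hconst2 : 4*(C₁^2*C₂*D) ≤ C₁^2*C₂*(1+4*D) := by
    nlinarith [mul_nonneg (mul_nonneg (sq_nonneg C₁) hC₂.le) hD.le]
  calc ‖∫ x in A, Ssum X a lam x * G x‖^2
      ≤ (∑ n ∈ s, |a n| * ‖In n‖)^2 :=
        pow_le_pow_left₀ (norm_nonneg _) h1 2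
    _ ≤ (∑ n ∈ s, |a n|^2) * (∑ n ∈ s, ‖In n‖^2) := h2
    _ ≤ (X*(C₁*ℒ)^2) * (∑ n ∈ s, ‖In n‖^2) :=
        mul_le_mul_of_nonneg_right h3 hSInn
    _ ≤ (X*(C₁*ℒ)^2) * (C₂*U*Q1^2 + 4*B*(D*ℒ)*Q2) :=
        mul_le_mul_of_nonneg_left h4 (by positivity)
    _ = C₁^2*C₂*(U*X*ℒ^2*Q1^2) + 4*(C₁^2*C₂*D)*(ℒ^4*(X*X^(1-c))*Q2) := by
        rw [hBdef]; ring
    _ = C₁^2*C₂*(U*X*ℒ^2*Q1^2) + 4*(C₁^2*C₂*D)*(ℒ^4*X^(2-c)*Q2) := by rw [hXX]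
    _ ≤ C₁^2*C₂*(1+4*D)*(U*X*ℒ^2*Q1^2) + C₁^2*C₂*(1+4*D)*(ℒ^4*X^(2-c)*Q2) :=
        add_le_add (mul_le_mul_of_nonneg_right hconst t1)
          (mul_le_mul_of_nonneg_right hconst2 t2)
    _ = C₁^2*C₂*(1+4*D) * (ℒ^4*X^(2-c)*Q2 + U*X*ℒ^2*Q1^2) := by ring
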